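/- arXiv:2106.05597 — 3 statements merged into one kernel-verified Lean document; each statement's English description precedes it below -/
import Mathlib

section
/- Let A be an n×n real symmetric positive definite matrix and B an n×n real symmetric positive semidefinite matrix with A ⪰ B. Then for every vector y in the column space (range) of B, yᵀ A⁻¹ y ≤ yᵀ B† y, where B† denotes the Moore–Penrose pseudoinverse of B. -/
open Matrix
open scoped Classical

/-- `G` satisfies the four Penrose conditions for `M`, i.e. `G` is the
Moore–Penrose pseudoinverse of `M`. -/
def IsMoorePenrose {D n : ℕ} (M : Matrix (Fin D) (Fin n) ℝ)
    (G : Matrix (Fin n) (Fin D) ℝ) : Prop :=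
  M * G * M = M ∧ G * M * G = G ∧ (M * G)ᵀ = M * G ∧ (G * M)ᵀ = G * M

/-- The Moore–Penrose pseudoinverse `M†` of a real matrix `M`, defined as the
(unique) matrix satisfying the four Penrose conditions. -/
noncomputable def pinv {D n : ℕ} (M : Matrix (Fin D) (Fin n) ℝ) :
    Matrix (Fin n) (Fin D) ℝ :=
  if h : ∃ G, IsMoorePenrose M G then h.choose else 0

lemma exists_pinv_of_symm {n : ℕ} (B : Matrix (Fin n) (Fin n) ℝ)
    (hB : B.IsHermitian) : ∃ G, IsMoorePenrose B G := by
  set U : Matrix (Fin n) (Fin n) ℝ := (hB.eigenvectorUnitary : Matrix (Fin n) (Fin n) ℝ) with hU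
  have hU1 : star U * U = 1 := Unitary.coe_star_mul_self hB.eigenvectorUnitary
  set f : Fin n → ℝ := RCLike.ofReal ∘ hB.eigenvalues with hf
  have hBspec : B = U * diagonal f * star U := hB.spectral_theorem
  have hstar : star U = Uᵀ := by
    rw [Matrix.star_eq_conjTranspose, conjTranspose_eq_transpose_of_trivial]
  have hmul : ∀ g h : Fin n → ℝ,
      (U * diagonal g * star U) * (U * diagonal h * star U)
        = U * diagonal (fun i => g i * h i) * star U := by
    intro g h
    calc (U * diagonal g * star U) * (U * diagonal h * star U)
        = U * diagonal g * (star U * U) * diagonal h * star U := by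
          simp only [Matrix.mul_assoc]
      _ = U * (diagonal g * diagonal h) * star U := by
          rw [hU1, Matrix.mul_one]; simp only [Matrix.mul_assoc]
      _ = U * diagonal (fun i => g i * h i) * star U := by
          rw [diagonal_mul_diagonal]
  have hsym : ∀ g : Fin n → ℝ,
      (U * diagonal g * star U)ᵀ = U * diagonal g * star U := by
    intro g
    simp [hstar, Matrix.transpose_mul, diagonal_transpose, Matrix.mul_assoc]
  have hdiag : ∀ g : Fin n → ℝ, ∀ g' : Fin n → ℝ, g = g' →
      U * diagonal g * star U = U * diagonal g' * star U := by
    rintro g g' rfl; rfl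
  refine ⟨U * diagonal (fun i => (f i)⁻¹) * star U, ?_, ?_, ?_, ?_⟩
  · rw [hBspec, hmul, hmul]
    refine hdiag _ _ ?_
    funext i
    rcases eq_or_ne (f i) 0 with h | h
    · simp [h]
    · field_simp
  · rw [hBspec, hmul, hmul]
    refine hdiag _ _ ?_
    funext i
    rcases eq_or_ne (f i) 0 with h | h
    · simp [h]
    · field_simp
  · rw [hBspec, hmul]; exact hsym _
  · rw [hBspec, hmul]; exact hsym _

/-- If `A` is symmetric positive definite, `B` symmetric positive
semidefinite, `A ⪰ B`, then for every `y` in the column space of `B`,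
`yᵀ A⁻¹ y ≤ yᵀ B† y`. -/
theorem stmt1 (n : ℕ) (A B : Matrix (Fin n) (Fin n) ℝ)
    (hA : A.PosDef) (hB : B.PosSemidef) (hAB : (A - B).PosSemidef) :
    ∀ y : Fin n → ℝ, (∃ x, B.mulVec x = y) →
      y ⬝ᵥ (A⁻¹.mulVec y) ≤ y ⬝ᵥ ((pinv B).mulVec y) := by
  rintro y ⟨x, hx⟩
  have hEx : ∃ G, IsMoorePenrose B G := exists_pinv_of_symm B hB.1
  have hP : IsMoorePenrose B (pinv B) := by
    rw [pinv, dif_pos hEx]; exact hEx.choose_spec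
  have hBsym : Bᵀ = B := by
    rw [← conjTranspose_eq_transpose_of_trivial]; exact hB.1
  set w : Fin n → ℝ := A⁻¹.mulVec y with hw
  have hvec : ∀ v : Fin n → ℝ, B.mulVec v = Matrix.vecMul v B := by
    intro v
    conv_lhs => rw [← hBsym]
    rw [Matrix.mulVec_transpose]
  have h1 : y ⬝ᵥ ((pinv B).mulVec y) = x ⬝ᵥ y :=
    calc y ⬝ᵥ ((pinv B).mulVec y)
        = (Matrix.vecMul x B) ⬝ᵥ ((pinv B * B).mulVec x) := by
          rw [← hx, Matrix.mulVec_mulVec, hvec x]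
      _ = x ⬝ᵥ ((B * (pinv B * B)).mulVec x) := by
          rw [← Matrix.dotProduct_mulVec, Matrix.mulVec_mulVec]
      _ = x ⬝ᵥ y := by rw [← Matrix.mul_assoc, hP.1, hx]
  have hAdet : IsUnit A.det := isUnit_iff_ne_zero.mpr hA.det_pos.ne'
  have e1 : w ⬝ᵥ (A.mulVec w) = w ⬝ᵥ y := by
    rw [hw, Matrix.mulVec_mulVec, Matrix.mul_nonsing_inv A hAdet, Matrix.one_mulVec]
  have e2 : w ⬝ᵥ (B.mulVec x) = w ⬝ᵥ y := by rw [hx]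
  have e3 : x ⬝ᵥ (B.mulVec w) = w ⬝ᵥ y := by
    rw [Matrix.dotProduct_mulVec, ← hvec, hx, dotProduct_comm]
  have e4 : x ⬝ᵥ (B.mulVec x) = x ⬝ᵥ y := by rw [hx]
  have n1 := hAB.dotProduct_mulVec_nonneg w
  simp only [star_trivial, Matrix.sub_mulVec, dotProduct_sub] at n1
  have n2 := hB.dotProduct_mulVec_nonneg (x - w)
  simp only [star_trivial, Matrix.mulVec_sub, dotProduct_sub, sub_dotProduct] at n2
  have hyw : y ⬝ᵥ (A⁻¹.mulVec y) = w ⬝ᵥ y := by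
    rw [← hw, dotProduct_comm]
  rw [h1, hyw]
  linarith [n1, n2, e1, e2, e3, e4]
end

section
/- Let X be a d×n real matrix with columns x₁,…,x_n, let γ, β ∈ ℝ^d, α ∈ ℝ, and define y ∈ ℝ^n by y_s = α·(x_sᵀγ)·(x_sᵀβ) for each s. If H is an n×n real symmetric positive definite matrix with H ⪰ (1/(2π))·(XᵀX)^{∘2}, then yᵀ H⁻¹ y ≤ 2π·α²·‖γ‖₂²·‖β‖₂². -/
open Matrix Real

/-- The entrywise (Hadamard) `k`-th power of a matrix. -/
def hadamardPow {m n : ℕ} (A : Matrix (Fin m) (Fin n) ℝ) (k : ℕ) :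
    Matrix (Fin m) (Fin n) ℝ :=
  Matrix.of fun i j => (A i j) ^ k

private lemma sum_swap3 {a b c : ℕ} (f : Fin a → Fin b → Fin c → ℝ) :
    ∑ s, ∑ i, ∑ j, f s i j = ∑ i, ∑ j, ∑ s, f s i j := by
  rw [Finset.sum_comm]
  exact Finset.sum_congr rfl fun i _ => Finset.sum_comm

private lemma sum_swap4 {a b : ℕ} (f : Fin a → Fin a → Fin b → Fin b → ℝ) :
    ∑ s, ∑ t, ∑ i, ∑ j, f s t i j = ∑ i, ∑ j, ∑ s, ∑ t, f s t i j := by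
  calc ∑ s, ∑ t, ∑ i, ∑ j, f s t i j
      = ∑ s, ∑ i, ∑ j, ∑ t, f s t i j :=
        Finset.sum_congr rfl fun s _ => sum_swap3 _
    _ = ∑ i, ∑ j, ∑ s, ∑ t, f s t i j := sum_swap3 _

/-- with `y_s = α·(x_sᵀγ)·(x_sᵀβ)` (where `x_s` is the `s`-th
column of `X`), if `H` is symmetric positive definite with
`H ⪰ (1/(2π))·(XᵀX)^{∘2}`, then `yᵀ H⁻¹ y ≤ 2π·α²·‖γ‖₂²·‖β‖₂²`. -/
theorem stmt9 (d n : ℕ) (X : Matrix (Fin d) (Fin n) ℝ) (γ β : Fin d → ℝ)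
    (α : ℝ) (y : Fin n → ℝ)
    (hy : ∀ s, y s = α * ((fun i => X i s) ⬝ᵥ γ) * ((fun i => X i s) ⬝ᵥ β))
    (H : Matrix (Fin n) (Fin n) ℝ) (hH : H.PosDef)
    (hLoewner : (H - (1 / (2 * π)) • hadamardPow (Xᵀ * X) 2).PosSemidef) :
    y ⬝ᵥ (H⁻¹.mulVec y)
      ≤ 2 * π * α ^ 2 * (∑ i, (γ i) ^ 2) * (∑ i, (β i) ^ 2) := by
  set z : Fin n → ℝ := H⁻¹.mulVec y with hz
  set K : Matrix (Fin n) (Fin n) ℝ := hadamardPow (Xᵀ * X) 2 with hK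
  set M : Fin d → Fin d → ℝ := fun i j => ∑ s, z s * X i s * X j s with hM
  set q : ℝ := y ⬝ᵥ H⁻¹.mulVec y with hq
  have hπ : (0:ℝ) < π := Real.pi_pos
  have hHz : H.mulVec z = y := by
    rw [hz, mulVec_mulVec,
      Matrix.mul_nonsing_inv H (isUnit_iff_ne_zero.mpr (ne_of_gt hH.det_pos)),
      one_mulVec]
  -- q as a quadratic form in z
  have hq1 : q = z ⬝ᵥ H.mulVec z := by
    rw [hHz, hq, dotProduct_comm]
  -- Loewner bound
  have h2 : (1 / (2 * π)) * (z ⬝ᵥ K.mulVec z) ≤ q := by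
    have h := hLoewner.dotProduct_mulVec_nonneg z
    simp only [star_trivial, sub_mulVec, smul_mulVec, dotProduct_sub,
      dotProduct_smul, smul_eq_mul, sub_nonneg] at h
    rw [hq1]; exact h
  -- expand z K z as Frobenius norm squared of M
  have hF : z ⬝ᵥ K.mulVec z = ∑ i, ∑ j, (M i j) ^ 2 := by
    have lhs : z ⬝ᵥ K.mulVec z
        = ∑ s, ∑ t, ∑ i, ∑ j,
          (z s * X i s * X j s) * (z t * X i t * X j t) := by
      simp only [dotProduct, mulVec, hK, hadamardPow, Matrix.of_apply,
        Matrix.mul_apply, Matrix.transpose_apply, sq]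
      refine Finset.sum_congr rfl fun s _ => ?_
      rw [Finset.mul_sum]
      refine Finset.sum_congr rfl fun t _ => ?_
      rw [Fintype.sum_mul_sum, Finset.sum_mul, Finset.mul_sum]
      refine Finset.sum_congr rfl fun i _ => ?_
      rw [Finset.sum_mul, Finset.mul_sum]
      refine Finset.sum_congr rfl fun j _ => ?_
      ring
    rw [lhs, sum_swap4]
    refine Finset.sum_congr rfl fun i _ =>
      Finset.sum_congr rfl fun j _ => ?_
    simp only [hM]
    rw [sq, Fintype.sum_mul_sum]
  -- q as a bilinear form in M
  have hqM : q = α * ∑ i, ∑ j, (γ i * β j) * M i j := by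
    have h0 : q = ∑ s, z s * y s := by rw [hq, dotProduct_comm, dotProduct]
    have h1 : ∀ s, z s * y s
        = ∑ i, ∑ j, α * (γ i * β j) * (z s * X i s * X j s) := by
      intro s
      rw [hy s]
      have e1 : ((fun i => X i s) ⬝ᵥ γ) = ∑ i, X i s * γ i := rfl
      have e2 : ((fun i => X i s) ⬝ᵥ β) = ∑ j, X j s * β j := rfl
      rw [e1, e2]
      rw [show z s * (α * (∑ i, X i s * γ i) * (∑ j, X j s * β j))
          = (α * z s) * ((∑ i, X i s * γ i) * (∑ j, X j s * β j)) from by ring]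
      rw [Fintype.sum_mul_sum (fun i => X i s * γ i) (fun j => X j s * β j),
        Finset.mul_sum]
      refine Finset.sum_congr rfl fun i _ => ?_
      rw [Finset.mul_sum]
      refine Finset.sum_congr rfl fun j _ => ?_
      ring
    rw [h0]
    simp only [h1]
    rw [sum_swap3 (fun s i j => α * (γ i * β j) * (z s * X i s * X j s)),
      Finset.mul_sum]
    refine Finset.sum_congr rfl fun i _ => ?_
    rw [Finset.mul_sum]
    refine Finset.sum_congr rfl fun j _ => ?_
    simp only [hM]
    rw [Finset.mul_sum, Finset.mul_sum]
    refine Finset.sum_congr rfl fun s _ => ?_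
    ring
  -- Cauchy-Schwarz
  have hCS : (∑ i, ∑ j, (γ i * β j) * M i j) ^ 2
      ≤ ((∑ i, (γ i)^2) * (∑ j, (β j)^2)) * (∑ i, ∑ j, (M i j)^2) := by
    have h := Finset.sum_mul_sq_le_sq_mul_sq (Finset.univ : Finset (Fin d × Fin d))
      (fun p => γ p.1 * β p.2) (fun p => M p.1 p.2)
    simp only [Fintype.sum_prod_type] at h
    calc (∑ i, ∑ j, (γ i * β j) * M i j) ^ 2
        ≤ (∑ i, ∑ j, (γ i * β j)^2) * (∑ i, ∑ j, (M i j)^2) := h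
      _ = ((∑ i, (γ i)^2) * (∑ j, (β j)^2)) * (∑ i, ∑ j, (M i j)^2) := by
          congr 1
          rw [Finset.sum_mul]
          refine Finset.sum_congr rfl fun i _ => ?_
          rw [Finset.mul_sum]
          refine Finset.sum_congr rfl fun j _ => ?_
          ring
  -- put everything together
  set G : ℝ := ∑ i, (γ i)^2 with hG
  set B : ℝ := ∑ i, (β i)^2 with hB
  set F : ℝ := ∑ i, ∑ j, (M i j)^2 with hFdef
  have hGnn : 0 ≤ G := Finset.sum_nonneg fun i _ => sq_nonneg _
  have hBnn : 0 ≤ B := Finset.sum_nonneg fun i _ => sq_nonneg _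
  have hF2π : F ≤ 2 * π * q := by
    have h2' := h2
    rw [hF] at h2'
    have h3 := mul_le_mul_of_nonneg_left h2' (by positivity : (0:ℝ) ≤ 2*π)
    rwa [show (2*π) * (1/(2*π) * F) = F by field_simp] at h3
  have hABnn : (0:ℝ) ≤ α^2 * (G * B) := by positivity
  have hq2 : q ^ 2 ≤ α ^ 2 * (G * B) * F := by
    rw [hqM, mul_pow]
    calc α^2 * (∑ i, ∑ j, (γ i * β j) * M i j)^2
        ≤ α^2 * ((G * B) * F) := mul_le_mul_of_nonneg_left hCS (sq_nonneg α)
      _ = α^2 * (G * B) * F := by ring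
  have hq3 : q^2 ≤ (2*π*α^2*G*B) * q := by
    nlinarith [mul_le_mul_of_nonneg_left hF2π hABnn]
  have hC : (0:ℝ) ≤ 2*π*α^2*G*B := by positivity
  nlinarith [hq3, hC]
end

section
/- Let X be a d×n real matrix with columns x₁,…,x_n, let γ, β ∈ ℝ^d, α ∈ ℝ, p a positive integer, and define y ∈ ℝ^n by y_s = α·(x_sᵀγ)·(x_sᵀβ)^p for each s. If H is an n×n real symmetric positive definite matrix with H ⪰ (1/(2π p²))·(XᵀX)^{∘(p+1)}, then yᵀ H⁻¹ y ≤ 2π·p²·α²·‖γ‖₂²·‖β‖₂^{2p}. -/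
open Matrix Real

/-- Expansion of a power of a sum as a sum over functions. -/
lemma pow_sum_expand (d m : ℕ) (a : Fin d → ℝ) :
    (∑ j, a j) ^ m = ∑ f : Fin m → Fin d, ∏ k, a (f k) := by
  classical
  calc (∑ j, a j) ^ m = ∏ _k : Fin m, (∑ j, a j) := by
        rw [Finset.prod_const, Finset.card_univ, Fintype.card_fin]
    _ = ∑ f ∈ Fintype.piFinset (fun _ : Fin m => (Finset.univ : Finset (Fin d))),
          ∏ k, a (f k) := Finset.prod_univ_sum _ _
    _ = ∑ f : Fin m → Fin d, ∏ k, a (f k) := by rw [Fintype.piFinset_univ]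

/-- with `y_s = α·(x_sᵀγ)·(x_sᵀβ)^p` (where `x_s` is the `s`-th
column of `X`), if `H` is symmetric positive definite with
`H ⪰ (1/(2πp²))·(XᵀX)^{∘(p+1)}`, then `yᵀ H⁻¹ y ≤ 2π·p²·α²·‖γ‖₂²·‖β‖₂^{2p}`. -/
theorem stmt10 (d n : ℕ) (X : Matrix (Fin d) (Fin n) ℝ) (γ β : Fin d → ℝ)
    (α : ℝ) (p : ℕ) (hp : 0 < p) (y : Fin n → ℝ)
    (hy : ∀ s, y s = α * ((fun i => X i s) ⬝ᵥ γ) * ((fun i => X i s) ⬝ᵥ β) ^ p)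
    (H : Matrix (Fin n) (Fin n) ℝ) (hH : H.PosDef)
    (hLoewner :
      (H - (1 / (2 * π * (p : ℝ) ^ 2)) • hadamardPow (Xᵀ * X) (p + 1)).PosSemidef) :
    y ⬝ᵥ (H⁻¹.mulVec y)
      ≤ 2 * π * (p : ℝ) ^ 2 * α ^ 2 * (∑ i, (γ i) ^ 2) * (∑ i, (β i) ^ 2) ^ p := by
  classical
  set c : ℝ := 2 * π * (p : ℝ) ^ 2 with hc
  have hppos : (0 : ℝ) < (p : ℝ) := by exact_mod_cast hp
  have hπ : (0 : ℝ) < π := Real.pi_pos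
  have hcpos : 0 < c := by positivity
  set z : Fin n → ℝ := H⁻¹.mulVec y with hzdef
  have hdet : IsUnit H.det := isUnit_iff_ne_zero.mpr hH.det_pos.ne'
  have hz : H.mulVec z = y := by
    rw [hzdef, Matrix.mulVec_mulVec, Matrix.mul_nonsing_inv H hdet, Matrix.one_mulVec]
  -- the feature map
  set φ : (Fin d × (Fin p → Fin d)) → Fin n → ℝ :=
    fun q s => X q.1 s * ∏ k, X (q.2 k) s with hφdef
  set v : (Fin d × (Fin p → Fin d)) → ℝ :=
    fun q => α * γ q.1 * ∏ k, β (q.2 k) with hvdef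
  set w : (Fin d × (Fin p → Fin d)) → ℝ :=
    fun q => ∑ s, z s * φ q s with hwdef
  -- y as a linear combination of features
  have hys : ∀ s, y s = ∑ q : Fin d × (Fin p → Fin d), φ q s * v q := by
    intro s
    rw [hy s]
    simp only [dotProduct]
    rw [pow_sum_expand d p (fun i => X i s * β i)]
    rw [Fintype.sum_prod_type]
    simp only [Finset.mul_sum, Finset.sum_mul]
    rw [Finset.sum_comm]
    refine Finset.sum_congr rfl fun i _ => Finset.sum_congr rfl fun f _ => ?_
    simp only [hφdef, hvdef, Finset.prod_mul_distrib]
    ring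
  -- Q := y ⬝ᵥ z
  have hQwv : z ⬝ᵥ y = ∑ q : Fin d × (Fin p → Fin d), w q * v q := by
    simp only [dotProduct]
    calc ∑ s, z s * y s = ∑ s, ∑ q : Fin d × (Fin p → Fin d), z s * (φ q s * v q) := by
          refine Finset.sum_congr rfl fun s _ => ?_
          rw [hys s, Finset.mul_sum]
      _ = ∑ q : Fin d × (Fin p → Fin d), ∑ s, z s * (φ q s * v q) := Finset.sum_comm
      _ = ∑ q : Fin d × (Fin p → Fin d), w q * v q := by
          refine Finset.sum_congr rfl fun q _ => ?_
          rw [hwdef]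
          simp only [Finset.sum_mul]
          exact Finset.sum_congr rfl fun s _ => by ring
  -- the Hadamard power as a Gram matrix of features
  have key_st : ∀ s t : Fin n, (hadamardPow (Xᵀ * X) (p + 1)) s t
      = ∑ q : Fin d × (Fin p → Fin d), φ q s * φ q t := by
    intro s t
    have : (hadamardPow (Xᵀ * X) (p + 1)) s t = (∑ i, X i s * X i t) ^ (p + 1) := by
      simp [hadamardPow, Matrix.mul_apply, Matrix.transpose_apply]
    rw [this, pow_succ', pow_sum_expand d p (fun i => X i s * X i t)]
    rw [Fintype.sum_prod_type]
    simp only [Finset.mul_sum, Finset.sum_mul]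
    rw [Finset.sum_comm]
    refine Finset.sum_congr rfl fun i _ => Finset.sum_congr rfl fun f _ => ?_
    simp only [hφdef, Finset.prod_mul_distrib]
    ring
  have hKquad : z ⬝ᵥ (hadamardPow (Xᵀ * X) (p + 1)).mulVec z
      = ∑ q : Fin d × (Fin p → Fin d), (w q) ^ 2 := by
    simp only [dotProduct, Matrix.mulVec, dotProduct]
    calc ∑ s, z s * ∑ t, (hadamardPow (Xᵀ * X) (p + 1)) s t * z t
        = ∑ s, ∑ t, ∑ q : Fin d × (Fin p → Fin d), z s * ((φ q s * φ q t) * z t) := by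
          refine Finset.sum_congr rfl fun s _ => ?_
          rw [Finset.mul_sum]
          refine Finset.sum_congr rfl fun t _ => ?_
          rw [key_st s t, Finset.sum_mul, Finset.mul_sum]
      _ = ∑ s, ∑ t, ∑ q : Fin d × (Fin p → Fin d),
            (z s * φ q s) * (z t * φ q t) := by
          refine Finset.sum_congr rfl fun s _ => Finset.sum_congr rfl fun t _ =>
            Finset.sum_congr rfl fun q _ => by ring
      _ = ∑ s, ∑ q : Fin d × (Fin p → Fin d), ∑ t,
            (z s * φ q s) * (z t * φ q t) :=
          Finset.sum_congr rfl fun s _ => Finset.sum_comm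
      _ = ∑ q : Fin d × (Fin p → Fin d), ∑ s, ∑ t,
            (z s * φ q s) * (z t * φ q t) := Finset.sum_comm
      _ = ∑ q : Fin d × (Fin p → Fin d), (w q) ^ 2 := by
          refine Finset.sum_congr rfl fun q _ => ?_
          rw [hwdef, sq, Finset.sum_mul_sum]
  -- norm of v
  have hvnorm : ∑ q : Fin d × (Fin p → Fin d), (v q) ^ 2
      = α ^ 2 * (∑ i, (γ i) ^ 2) * (∑ i, (β i) ^ 2) ^ p := by
    rw [pow_sum_expand d p (fun i => β i ^ 2), Fintype.sum_prod_type]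
    simp only [Finset.mul_sum, Finset.sum_mul]
    rw [Finset.sum_comm]
    refine Finset.sum_congr rfl fun f _ => Finset.sum_congr rfl fun i _ => ?_
    simp only [hvdef]
    rw [mul_pow, mul_pow, ← Finset.prod_pow]
  -- Loewner bound
  have hLz : 0 ≤ z ⬝ᵥ (H - (1 / c) • hadamardPow (Xᵀ * X) (p + 1)).mulVec z := by
    simpa using hLoewner.dotProduct_mulVec_nonneg z
  have hHz : z ⬝ᵥ H.mulVec z = z ⬝ᵥ y := by rw [hz]
  have hsub : z ⬝ᵥ (H - (1 / c) • hadamardPow (Xᵀ * X) (p + 1)).mulVec z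
      = z ⬝ᵥ H.mulVec z - (1 / c) * (z ⬝ᵥ (hadamardPow (Xᵀ * X) (p + 1)).mulVec z) := by
    rw [Matrix.sub_mulVec, dotProduct_sub, Matrix.smul_mulVec, dotProduct_smul]
    simp [smul_eq_mul]
  have hbound : (1 / c) * (∑ q : Fin d × (Fin p → Fin d), (w q) ^ 2) ≤ z ⬝ᵥ y := by
    rw [← hKquad, ← hHz]
    linarith [hLz, hsub.symm.le, hsub.le]
  have hwle : ∑ q : Fin d × (Fin p → Fin d), (w q) ^ 2 ≤ c * (z ⬝ᵥ y) := by
    have := mul_le_mul_of_nonneg_left hbound (le_of_lt hcpos)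
    rw [← mul_assoc, mul_one_div, div_self hcpos.ne', one_mul] at this
    exact this
  -- Cauchy–Schwarz
  have hCS : (∑ q : Fin d × (Fin p → Fin d), w q * v q) ^ 2
      ≤ (∑ q : Fin d × (Fin p → Fin d), (w q) ^ 2) * (∑ q : Fin d × (Fin p → Fin d), (v q) ^ 2) :=
    Finset.sum_mul_sq_le_sq_mul_sq _ _ _
  set Q : ℝ := z ⬝ᵥ y with hQdef
  have hQy : y ⬝ᵥ (H⁻¹.mulVec y) = Q := by rw [hQdef, dotProduct_comm, hzdef]
  have hQnonneg : 0 ≤ Q := by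
    rw [hQdef, ← hz]
    simpa using hH.posSemidef.dotProduct_mulVec_nonneg z
  set V : ℝ := α ^ 2 * (∑ i, (γ i) ^ 2) * (∑ i, (β i) ^ 2) ^ p with hVdef
  have hVnonneg : 0 ≤ V := by
    rw [hVdef]
    have h1 : (0:ℝ) ≤ ∑ i, (γ i) ^ 2 := Finset.sum_nonneg fun i _ => sq_nonneg _
    have h2 : (0:ℝ) ≤ ∑ i, (β i) ^ 2 := Finset.sum_nonneg fun i _ => sq_nonneg _
    positivity
  have hQ2 : Q ^ 2 ≤ c * Q * V := by
    have h1 : Q ^ 2 ≤ (∑ q : Fin d × (Fin p → Fin d), (w q) ^ 2) * V := by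
      rw [hQwv, ← hvnorm]
      exact hCS
    calc Q ^ 2 ≤ (∑ q : Fin d × (Fin p → Fin d), (w q) ^ 2) * V := h1
      _ ≤ (c * Q) * V := mul_le_mul_of_nonneg_right hwle hVnonneg
      _ = c * Q * V := rfl
  have hfin : Q ≤ c * V := by
    rcases eq_or_lt_of_le hQnonneg with h0 | hpos
    · rw [← h0]; positivity
    · nlinarith [hQ2, hpos]
  rw [hQy]
  calc Q ≤ c * V := hfin
    _ = 2 * π * (p : ℝ) ^ 2 * α ^ 2 * (∑ i, (γ i) ^ 2) * (∑ i, (β i) ^ 2) ^ p := by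
        rw [hc, hVdef]; ring
end
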